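/- arXiv:0907.1552 — 2 statements merged into one kernel-verified Lean document; each statement's English description precedes it below -/
import Mathlib

section
/- Let Ω ⊆ ℝ² be a bounded open set, let t > 1, and let Ω_t = {(x, t·y) : (x, y) ∈ Ω} be the stretch of Ω by factor t in the y-direction. Given u : ℝ² → ℝ that is C¹ on a neighborhood of the closure of Ω, define v(x, y) = u(x, y/t). Then: (a) ∫_{Ω_t} v dA = t·∫_Ω u dA; (b) ∫_{Ω_t} v² dA = t·∫_Ω u² dA; and (c) ∫_{Ω_t} ‖∇v‖² dA ≤ t·∫_Ω ‖∇u‖² dA. In particular, if ∫_Ω u dA = 0 and ∫_Ω u² dA > 0, then v has mean value zero over Ω_t and its Rayleigh quotient satisfies (∫_{Ω_t} ‖∇v‖² dA)/(∫_{Ω_t} v² dA) ≤ (∫_Ω ‖∇u‖² dA)/(∫_Ω u² dA). -/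
open MeasureTheory Real

noncomputable section

/-- The Euclidean plane. -/
abbrev E2 := EuclideanSpace ℝ (Fin 2)

/-- The point (a, b) in the Euclidean plane. -/
def pt (a b : ℝ) : E2 := WithLp.toLp 2 ![a, b]

/-- The Bessel function `J_n(x) = (1/π)·∫₀^π cos(nθ − x·sin θ) dθ`. -/
def besselJ (n : ℕ) (x : ℝ) : ℝ :=
  (1 / π) * ∫ θ in (0:ℝ)..π, Real.cos (n * θ - x * Real.sin θ)

lemma pt_zero (a b : ℝ) : pt a b 0 = a := rfl
lemma pt_one (a b : ℝ) : pt a b 1 = b := rfl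

lemma pt_eta (p : E2) : pt (p 0) (p 1) = p := by
  ext i; fin_cases i <;> rfl

def stretchLin (c : ℝ) : E2 →ₗ[ℝ] E2 where
  toFun p := pt (p 0) (c * p 1)
  map_add' p q := by ext i; fin_cases i <;> (simp [pt]; try ring)
  map_smul' a p := by ext i; fin_cases i <;> (simp [pt]; try ring)

def stretchCLM (c : ℝ) : E2 →L[ℝ] E2 := (stretchLin c).toContinuousLinearMap

lemma stretch_det (c : ℝ) : LinearMap.det (stretchLin c) = c := by
  rw [← LinearMap.det_toMatrix (EuclideanSpace.basisFun (Fin 2) ℝ).toBasis]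
  rw [Matrix.det_fin_two]
  simp [LinearMap.toMatrix_apply, stretchLin, pt, EuclideanSpace.basisFun_apply,
    EuclideanSpace.single_apply]

lemma norm_gradient_eq (f : E2 → ℝ) (x : E2) : ‖gradient f x‖ = ‖fderiv ℝ f x‖ := by
  simp [gradient, LinearIsometryEquiv.norm_map]

lemma stretch_norm_le (c : ℝ) (hc0 : 0 < c) (hc1 : c ≤ 1) : ‖stretchCLM c‖ ≤ 1 := by
  apply ContinuousLinearMap.opNorm_le_bound _ zero_le_one
  intro p
  rw [one_mul]
  have h1 : (stretchCLM c p : E2) = pt (p 0) (c * p 1) := rfl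
  rw [h1, EuclideanSpace.norm_eq, EuclideanSpace.norm_eq]
  apply Real.sqrt_le_sqrt
  rw [Fin.sum_univ_two, Fin.sum_univ_two]
  simp only [pt, Matrix.cons_val_zero, Matrix.cons_val_one, Matrix.head_cons,
    Real.norm_eq_abs, sq_abs]
  nlinarith [sq_nonneg (p 1), mul_le_one₀ hc1 hc0.le hc1, sq_nonneg (p 1)]

lemma change_var (Ω : Set E2) (hΩ : MeasurableSet Ω) (t : ℝ) (ht : 0 < t) (g : E2 → ℝ) :
    ∫ z in (fun p : E2 => pt (p 0) (t * p 1)) '' Ω, g z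
      = t * ∫ x in Ω, g (pt (x 0) (t * x 1)) := by
  have hT : (fun p : E2 => pt (p 0) (t * p 1)) = ⇑(stretchCLM t) := rfl
  have hinj : Set.InjOn (⇑(stretchCLM t)) Ω := by
    intro p hp q hq h
    have h0 := congrArg (fun r : E2 => r 0) h
    have h1 := congrArg (fun r : E2 => r 1) h
    simp only [stretchCLM, stretchLin] at h0 h1
    ext i; fin_cases i
    · exact h0
    · exact mul_left_cancel₀ (ne_of_gt ht) h1
  have := MeasureTheory.integral_image_eq_integral_abs_det_fderiv_smul
    (volume : Measure E2) hΩ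
    (fun x _ => ((stretchCLM t).hasFDerivAt (x := x)).hasFDerivWithinAt) hinj g
  rw [hT, this]
  have hdet : (stretchCLM t).det = t := by
    rw [ContinuousLinearMap.det]
    simpa [stretchCLM] using stretch_det t
  simp only [hdet, abs_of_pos ht, smul_eq_mul]
  rw [integral_const_mul]
  rfl

/-- Stretching a domain by a factor `t > 1` in the y-direction does not
increase the Rayleigh quotient of a transplanted trial function. -/
theorem stretching_reduces_rayleigh
    (Ω : Set E2) (hΩo : IsOpen Ω) (hΩb : Bornology.IsBounded Ω)
    (t : ℝ) (ht : 1 < t)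
    (Ωt : Set E2) (hΩt : Ωt = (fun p : E2 => pt (p 0) (t * p 1)) '' Ω)
    (u : E2 → ℝ)
    (hu : ∃ U : Set E2, IsOpen U ∧ closure Ω ⊆ U ∧ ContDiffOn ℝ 1 u U)
    (v : E2 → ℝ) (hv : v = fun p : E2 => u (pt (p 0) (p 1 / t))) :
    (∫ z in Ωt, v z = t * ∫ z in Ω, u z) ∧
    (∫ z in Ωt, (v z)^2 = t * ∫ z in Ω, (u z)^2) ∧
    (∫ z in Ωt, ‖gradient v z‖^2 ≤ t * ∫ z in Ω, ‖gradient u z‖^2) ∧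
    ((∫ z in Ω, u z = 0) → (0 < ∫ z in Ω, (u z)^2) →
      (∫ z in Ωt, v z = 0) ∧
      (∫ z in Ωt, ‖gradient v z‖^2) / (∫ z in Ωt, (v z)^2) ≤
        (∫ z in Ω, ‖gradient u z‖^2) / (∫ z in Ω, (u z)^2)) := by
  obtain ⟨U, hUo, hUsub, huC1⟩ := hu
  have ht0 : (0:ℝ) < t := lt_trans one_pos ht
  have htne : t ≠ 0 := ne_of_gt ht0
  have hΩm : MeasurableSet Ω := hΩo.measurableSet
  have hvT : ∀ x : E2, v (pt (x 0) (t * x 1)) = u x := by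
    intro x
    rw [hv]
    simp only [pt_zero, pt_one]
    rw [mul_div_cancel_left₀ _ htne, pt_eta]
  -- part (a)
  have ha : ∫ z in Ωt, v z = t * ∫ z in Ω, u z := by
    rw [hΩt, change_var Ω hΩm t ht0 v]
    simp only [hvT]
  -- part (b)
  have hb : ∫ z in Ωt, (v z)^2 = t * ∫ z in Ω, (u z)^2 := by
    rw [hΩt, change_var Ω hΩm t ht0 (fun z => (v z)^2)]
    simp only [hvT]
  -- part (c)
  have hvS : v = u ∘ ⇑(stretchCLM (1/t)) := by
    rw [hv]; funext p
    have h1 : (stretchCLM (1/t)) p = pt (p 0) (1/t * p 1) := rfl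
    simp only [Function.comp_apply]
    rw [h1, one_div_mul_eq_div]
  have hST : ∀ x : E2, stretchCLM (1/t) (pt (x 0) (t * x 1)) = x := by
    intro x
    have h1 : stretchCLM (1/t) (pt (x 0) (t * x 1)) = pt (x 0) (1/t * (t * x 1)) := rfl
    rw [h1, one_div, inv_mul_cancel_left₀ htne, pt_eta]
  have hdiffU : ∀ x ∈ U, DifferentiableAt ℝ u x := fun x hx =>
    (huC1.differentiableOn one_ne_zero).differentiableAt (hUo.mem_nhds hx)
  have hfdv : ∀ x ∈ U, fderiv ℝ v (pt (x 0) (t * x 1))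
      = (fderiv ℝ u x).comp (stretchCLM (1/t)) := by
    intro x hx
    have h1 : HasFDerivAt u (fderiv ℝ u x) (stretchCLM (1/t) (pt (x 0) (t * x 1))) := by
      rw [hST x]; exact (hdiffU x hx).hasFDerivAt
    have h2 := (stretchCLM (1/t)).hasFDerivAt (x := pt (x 0) (t * x 1))
    have h3 := h1.comp (pt (x 0) (t * x 1)) h2
    rw [hvS]
    exact h3.fderiv
  have hSnorm : ‖stretchCLM (1/t)‖ ≤ 1 :=
    stretch_norm_le _ (by positivity) ((div_le_one ht0).2 ht.le)
  have hptle : ∀ x ∈ Ω, ‖gradient v (pt (x 0) (t * x 1))‖^2 ≤ ‖fderiv ℝ u x‖^2 := by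
    intro x hx
    have hxU : x ∈ U := hUsub (subset_closure hx)
    rw [norm_gradient_eq, hfdv x hxU]
    have h1 : ‖(fderiv ℝ u x).comp (stretchCLM (1/t))‖ ≤ ‖fderiv ℝ u x‖ := by
      calc ‖(fderiv ℝ u x).comp (stretchCLM (1/t))‖
          ≤ ‖fderiv ℝ u x‖ * ‖stretchCLM (1/t)‖ := ContinuousLinearMap.opNorm_comp_le _ _
        _ ≤ ‖fderiv ℝ u x‖ * 1 := mul_le_mul_of_nonneg_left hSnorm (norm_nonneg _)
        _ = ‖fderiv ℝ u x‖ := mul_one _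
    exact pow_le_pow_left₀ (norm_nonneg _) h1 2
  have hK : IsCompact (closure Ω) :=
    Metric.isCompact_of_isClosed_isBounded isClosed_closure hΩb.closure
  have hfc : ContinuousOn (fderiv ℝ u) U :=
    huC1.continuousOn_fderiv_of_isOpen hUo le_rfl
  have hint : IntegrableOn (fun x => ‖fderiv ℝ u x‖^2) Ω := by
    have hg1c : ContinuousOn (fun x => ‖fderiv ℝ u x‖^2) U := (hfc.norm).pow 2
    exact ((hg1c.mono hUsub).integrableOn_compact hK).mono_set subset_closure
  have hc : ∫ z in Ωt, ‖gradient v z‖^2 ≤ t * ∫ z in Ω, ‖gradient u z‖^2 := by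
    rw [hΩt, change_var Ω hΩm t ht0 (fun z => ‖gradient v z‖^2)]
    have heq : ∫ x in Ω, ‖gradient u x‖^2 = ∫ x in Ω, ‖fderiv ℝ u x‖^2 := by
      simp only [norm_gradient_eq]
    rw [heq]
    refine mul_le_mul_of_nonneg_left ?_ ht0.le
    apply integral_mono_of_nonneg
    · exact Filter.Eventually.of_forall (fun x => by positivity)
    · exact hint
    · exact (ae_restrict_iff' hΩm).2 (Filter.Eventually.of_forall (fun x hx => hptle x hx))
  refine ⟨ha, hb, hc, fun hmean hpos => ⟨by rw [ha, hmean, mul_zero], ?_⟩⟩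
  rw [hb]
  calc (∫ z in Ωt, ‖gradient v z‖^2) / (t * ∫ z in Ω, (u z)^2)
      ≤ (t * ∫ z in Ω, ‖gradient u z‖^2) / (t * ∫ z in Ω, (u z)^2) := by
        exact div_le_div_of_nonneg_right hc (mul_pos ht0 hpos).le
    _ = (∫ z in Ω, ‖gradient u z‖^2) / (∫ z in Ω, (u z)^2) :=
        mul_div_mul_left _ _ htne
end
end

section
/- For every ε > 0 there exists α₀ ∈ (0, π/3) such that for every α ∈ (0, α₀), the subequilateral triangle T = T(α) with equal-side length l = 1 (hence diameter 1) admits a function v : ℝ² → ℝ that is C¹ on a neighborhood of T with ∫_T v dA = 0, ∫_T v² dA > 0, and ∫_T ‖∇v‖² dA < (j_{1,1}² + ε)·∫_T v² dA. (This expresses the asymptotic sharpness of the inequality μ₁·D² > j_{1,1}² for degenerate acute isosceles triangles.) -/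
open MeasureTheory Real

noncomputable section

/-- The isosceles triangle `T(α)` with aperture `α` at the origin and
two equal sides of length `l`, symmetric about the x-axis. -/
def Tri (α l : ℝ) : Set E2 :=
  convexHull ℝ {pt 0 0, pt (l * Real.cos (α/2)) (l * Real.sin (α/2)),
    pt (l * Real.cos (α/2)) (-(l * Real.sin (α/2)))}

open intervalIntegral

lemma besselJ_hasDerivAt (n : ℕ) (x : ℝ) :
    HasDerivAt (besselJ n)
      ((1 / π) * ∫ θ in (0:ℝ)..π, Real.sin θ * Real.sin (n * θ - x * Real.sin θ)) x := by
  have h := intervalIntegral.hasDerivAt_integral_of_dominated_loc_of_deriv_le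
    (F := fun x θ => Real.cos (n * θ - x * Real.sin θ))
    (F' := fun x θ => Real.sin θ * Real.sin (n * θ - x * Real.sin θ))
    (x₀ := x) (a := 0) (b := π) (μ := volume) (bound := fun _ => 1)
    (Metric.ball_mem_nhds x one_pos)
    ?_ ?_ ?_ ?_ ?_ ?_
  · exact (h.2.const_mul (1/π))
  · filter_upwards with y
    exact (Continuous.aestronglyMeasurable (by fun_prop)).restrict
  · apply Continuous.intervalIntegrable; fun_prop
  · exact (Continuous.aestronglyMeasurable (by fun_prop)).restrict
  · filter_upwards with t _ y _
    calc ‖Real.sin t * Real.sin (n * t - y * Real.sin t)‖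
        = |Real.sin t| * |Real.sin (n * t - y * Real.sin t)| := abs_mul _ _
      _ ≤ 1 * 1 := by
          exact mul_le_mul (abs_sin_le_one t) (abs_sin_le_one _) (abs_nonneg _) zero_le_one
      _ = 1 := one_mul 1
  · exact intervalIntegrable_const
  · filter_upwards with t _ y _
    have : HasDerivAt (fun x : ℝ => (n * t - x * Real.sin t)) (-Real.sin t) y := by
      simpa using ((hasDerivAt_id y).mul_const (Real.sin t)).const_sub (n*t)
    exact ((Real.hasDerivAt_cos _).comp y this).congr_deriv (by ring)

lemma int_cos_cos (x : ℝ) : ∫ θ in (0:ℝ)..π, Real.cos θ * Real.cos (x * Real.sin θ) = 0 := by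
  rcases eq_or_ne x 0 with h | h
  · simp [h, integral_cos]
  · have key : ∫ θ in (0:ℝ)..π, x * (Real.cos θ * Real.cos (x * Real.sin θ)) = 0 := by
      have : ∀ θ ∈ Set.uIcc (0:ℝ) π, HasDerivAt (fun t => Real.sin (x * Real.sin t))
          (x * (Real.cos θ * Real.cos (x * Real.sin θ))) θ := by
        intro θ _
        have h1 : HasDerivAt (fun t : ℝ => x * Real.sin t) (x * Real.cos θ) θ :=
          (Real.hasDerivAt_sin θ).const_mul x
        have := (Real.hasDerivAt_cos (x * Real.sin θ))
        have h2 := (Real.hasDerivAt_sin (x * Real.sin θ)).comp θ h1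
        exact h2.congr_deriv (by ring)
      rw [integral_eq_sub_of_hasDerivAt this (by apply Continuous.intervalIntegrable; fun_prop)]
      simp
    rw [intervalIntegral.integral_const_mul] at key
    exact (mul_eq_zero.mp key).resolve_left h

lemma besselJ1_eq (x : ℝ) :
    besselJ 1 x = (1 / π) * ∫ θ in (0:ℝ)..π, Real.sin θ * Real.sin (x * Real.sin θ) := by
  unfold besselJ
  congr 1
  have : ∀ θ : ℝ, Real.cos ((1:ℕ) * θ - x * Real.sin θ)
      = Real.cos θ * Real.cos (x * Real.sin θ) + Real.sin θ * Real.sin (x * Real.sin θ) := by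
    intro θ; rw [show ((1:ℕ):ℝ) * θ = θ by push_cast; ring, Real.cos_sub]
  rw [integral_congr (fun θ _ => this θ),
    intervalIntegral.integral_add (by apply Continuous.intervalIntegrable; fun_prop)
      (by apply Continuous.intervalIntegrable; fun_prop), int_cos_cos, zero_add]

lemma besselJ0_hasDerivAt (x : ℝ) : HasDerivAt (besselJ 0) (-(besselJ 1 x)) x := by
  have h := besselJ_hasDerivAt 0 x
  convert h using 1
  have e : ∫ θ in (0:ℝ)..π, Real.sin θ * Real.sin ((0:ℕ) * θ - x * Real.sin θ)
      = ∫ θ in (0:ℝ)..π, -(Real.sin θ * Real.sin (x * Real.sin θ)) := by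
    apply integral_congr
    intro θ _
    simp only []
    rw [show ((0:ℕ):ℝ) * θ - x * Real.sin θ = -(x * Real.sin θ) by push_cast; ring, Real.sin_neg]
    ring
  rw [e, intervalIntegral.integral_neg, besselJ1_eq]
  ring

lemma besselJ_one_eq (x : ℝ) :
    besselJ 1 x = (1 / π) * ∫ θ in (0:ℝ)..π, Real.cos (θ - x * Real.sin θ) := by
  unfold besselJ
  congr 1
  apply integral_congr
  intro θ _
  norm_num

lemma besselJ_zero_eq (x : ℝ) :
    besselJ 0 x = (1 / π) * ∫ θ in (0:ℝ)..π, Real.cos (x * Real.sin θ) := by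
  unfold besselJ
  congr 1
  apply integral_congr
  intro θ _
  simp only []
  rw [show ((0:ℕ):ℝ) * θ - x * Real.sin θ = -(x * Real.sin θ) by push_cast; ring, Real.cos_neg]

lemma int_cos_sub (x : ℝ) : ∫ θ in (0:ℝ)..π, Real.cos (θ - x * Real.sin θ)
    = x * ∫ θ in (0:ℝ)..π, Real.cos θ * Real.cos (θ - x * Real.sin θ) := by
  have ftc : ∫ θ in (0:ℝ)..π, (Real.cos (θ - x * Real.sin θ)
      - x * (Real.cos θ * Real.cos (θ - x * Real.sin θ))) = 0 := by
    have hd : ∀ θ ∈ Set.uIcc (0:ℝ) π, HasDerivAt (fun t => Real.sin (t - x * Real.sin t))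
        (Real.cos (θ - x * Real.sin θ) - x * (Real.cos θ * Real.cos (θ - x * Real.sin θ))) θ := by
      intro θ _
      have h1 : HasDerivAt (fun t : ℝ => t - x * Real.sin t) (1 - x * Real.cos θ) θ :=
        (hasDerivAt_id θ).sub ((Real.hasDerivAt_sin θ).const_mul x)
      have h2 := (Real.hasDerivAt_sin (θ - x * Real.sin θ)).comp θ h1
      exact h2.congr_deriv (by ring)
    rw [integral_eq_sub_of_hasDerivAt hd (by apply Continuous.intervalIntegrable; fun_prop)]
    simp
  rw [intervalIntegral.integral_sub (by apply Continuous.intervalIntegrable; fun_prop)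
    (by apply Continuous.intervalIntegrable; fun_prop), intervalIntegral.integral_const_mul] at ftc
  linarith

lemma xJ1_hasDerivAt (x : ℝ) :
    HasDerivAt (fun y => y * besselJ 1 y) (x * besselJ 0 x) x := by
  have hD := besselJ_hasDerivAt 1 x
  have hmul := (hasDerivAt_id x).mul hD
  refine hmul.congr_deriv ?_
  simp only [id_eq, one_mul]
  have e1 : ∫ θ in (0:ℝ)..π, Real.sin θ * Real.sin ((1:ℕ) * θ - x * Real.sin θ)
      = ∫ θ in (0:ℝ)..π, Real.sin θ * Real.sin (θ - x * Real.sin θ) := by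
    apply integral_congr; intro θ _; norm_num
  have comb : x * ∫ θ in (0:ℝ)..π, (Real.cos θ * Real.cos (θ - x * Real.sin θ)
        + Real.sin θ * Real.sin (θ - x * Real.sin θ))
      = x * ∫ θ in (0:ℝ)..π, Real.cos (x * Real.sin θ) := by
    congr 1
    apply integral_congr
    intro θ _
    simp only []
    have h := Real.cos_sub θ (θ - x * Real.sin θ)
    rw [show θ - (θ - x * Real.sin θ) = x * Real.sin θ by ring] at h
    linarith
  rw [intervalIntegral.integral_add (by apply Continuous.intervalIntegrable; fun_prop)
    (by apply Continuous.intervalIntegrable; fun_prop)] at comb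
  rw [besselJ_zero_eq, besselJ_one_eq, int_cos_sub, e1]
  linear_combination (1/π) * comb

lemma besselJ_differentiable (n : ℕ) : Differentiable ℝ (besselJ n) :=
  fun x => (besselJ_hasDerivAt n x).differentiableAt

@[fun_prop] lemma besselJ_continuous (n : ℕ) : Continuous (besselJ n) :=
  (besselJ_differentiable n).continuous

lemma besselJ_zero_zero : besselJ 0 0 = 1 := by
  rw [besselJ_zero_eq]
  simp only [zero_mul, Real.cos_zero]
  rw [intervalIntegral.integral_const]
  field_simp
  simp

lemma contDiff_besselJ_zero : ContDiff ℝ 1 (besselJ 0) := by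
  rw [contDiff_one_iff_deriv]
  refine ⟨besselJ_differentiable 0, ?_⟩
  have : deriv (besselJ 0) = fun x => -(besselJ 1 x) := by
    funext x; exact (besselJ0_hasDerivAt x).deriv
  rw [this]
  exact (besselJ_continuous 1).neg

lemma int_xJ0 (c : ℝ) (hc : c ≠ 0) (s : ℝ) :
    ∫ x in (0:ℝ)..s, x * besselJ 0 (c * x)
      = (c * s) * besselJ 1 (c * s) / c ^ 2 := by
  have hd : ∀ x ∈ Set.uIcc (0:ℝ) s,
      HasDerivAt (fun y => (c * y) * besselJ 1 (c * y) / c ^ 2) (x * besselJ 0 (c * x)) x := by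
    intro x _
    have h1 : HasDerivAt (fun y : ℝ => c * y) c x := by
      simpa using (hasDerivAt_id x).const_mul c
    have h2 := (xJ1_hasDerivAt (c * x)).comp x h1
    have h3 := h2.div_const (c ^ 2)
    refine h3.congr_deriv ?_
    field_simp
  rw [integral_eq_sub_of_hasDerivAt hd
    (by apply Continuous.intervalIntegrable; fun_prop)]
  simp

lemma int_J0sq_sub_J1sq (c : ℝ) (hc : c ≠ 0) (s : ℝ) :
    ∫ x in (0:ℝ)..s, (x * (besselJ 0 (c * x)) ^ 2 - x * (besselJ 1 (c * x)) ^ 2)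
      = (c * s) * besselJ 0 (c * s) * besselJ 1 (c * s) / c ^ 2 := by
  have hd : ∀ x ∈ Set.uIcc (0:ℝ) s,
      HasDerivAt (fun y => (c * y) * besselJ 0 (c * y) * besselJ 1 (c * y) / c ^ 2)
        (x * (besselJ 0 (c * x)) ^ 2 - x * (besselJ 1 (c * x)) ^ 2) x := by
    intro x _
    have h1 : HasDerivAt (fun y : ℝ => c * y) c x := by
      simpa using (hasDerivAt_id x).const_mul c
    have hu : HasDerivAt (fun u : ℝ => (u * besselJ 1 u) * besselJ 0 u)
        ((c*x) * (besselJ 0 (c*x))^2 - (c*x) * (besselJ 1 (c*x))^2) (c * x) := by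
      have := (xJ1_hasDerivAt (c*x)).mul (besselJ0_hasDerivAt (c*x))
      exact this.congr_deriv (by ring)
    have h2 := (hu.comp x h1).div_const (c ^ 2)
    have hf : (fun y => (c * y) * besselJ 0 (c * y) * besselJ 1 (c * y) / c ^ 2)
        = fun x => ((fun u => u * besselJ 1 u * besselJ 0 u) ∘ fun y => c * y) x / c ^ 2 := by
      funext y; simp only [Function.comp]; ring
    rw [hf]; refine h2.congr_deriv ?_
    field_simp
  rw [integral_eq_sub_of_hasDerivAt hd
    (by apply Continuous.intervalIntegrable; fun_prop)]
  simp

lemma int_xJ0sq_pos (c a : ℝ) (hc : 0 < c) (ha : 0 < a) :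
    0 < ∫ x in (0:ℝ)..a, x * (besselJ 0 (c * x)) ^ 2 := by
  obtain ⟨δ₁, hδ₁, hJ⟩ := Metric.continuousAt_iff.mp (besselJ_continuous 0).continuousAt
    (1/2) (by norm_num)
  set δ := min (δ₁ / (2 * c)) a with hδdef
  have hδpos : 0 < δ := lt_min (by positivity) ha
  have hδa : δ ≤ a := min_le_right _ _
  have int1 : IntervalIntegrable (fun x => x * (besselJ 0 (c * x)) ^ 2) volume 0 δ := by
    apply Continuous.intervalIntegrable; fun_prop
  have int2 : IntervalIntegrable (fun x => x * (besselJ 0 (c * x)) ^ 2) volume δ a := by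
    apply Continuous.intervalIntegrable; fun_prop
  rw [← intervalIntegral.integral_add_adjacent_intervals int1 int2]
  have h1 : 0 < ∫ x in (0:ℝ)..δ, x * (besselJ 0 (c * x)) ^ 2 := by
    apply intervalIntegral.intervalIntegral_pos_of_pos_on int1 _ hδpos
    intro x hx
    have hx0 : 0 < x := hx.1
    have hcx : dist (c * x) 0 < δ₁ := by
      rw [Real.dist_eq, sub_zero, abs_of_pos (by positivity)]
      have : x < δ₁ / (2 * c) := lt_of_lt_of_le hx.2 (min_le_left _ _)
      calc c * x < c * (δ₁ / (2 * c)) := by exact (mul_lt_mul_iff_right₀ hc).mpr this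
        _ = δ₁ / 2 := by field_simp
        _ < δ₁ := by linarith
    have := hJ hcx
    rw [Real.dist_eq, besselJ_zero_zero] at this
    have hJpos : (0:ℝ) < besselJ 0 (c * x) := by
      cases abs_lt.mp this with
      | intro hl hr => linarith
    positivity
  have h2 : 0 ≤ ∫ x in δ..a, x * (besselJ 0 (c * x)) ^ 2 := by
    apply intervalIntegral.integral_nonneg hδa
    intro u hu
    have : 0 ≤ u := le_trans hδpos.le hu.1
    positivity
  linarith

lemma pt_apply0 (x y : ℝ) : pt x y 0 = x := rfl
lemma pt_apply1 (x y : ℝ) : pt x y 1 = y := rfl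

section tri
variable {a b : ℝ}

/-- closed region -/
def Creg (a b : ℝ) : Set E2 := {z | z 0 ≤ a ∧ |z 1| ≤ (b/a) * z 0}
/-- open region -/
def Oreg (a b : ℝ) : Set E2 := {z | 0 < z 0 ∧ z 0 < a ∧ |z 1| < (b/a) * z 0}

lemma convex_Creg (ha : 0 < a) (hb : 0 < b) : Convex ℝ (Creg a b) := by
  intro z hz w hw s t hs ht hst
  obtain ⟨hz1, hz2⟩ := hz
  obtain ⟨hw1, hw2⟩ := hw
  have e0 : (s • z + t • w) 0 = s * z 0 + t * w 0 := rfl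
  have e1 : (s • z + t • w) 1 = s * z 1 + t * w 1 := rfl
  constructor
  · rw [e0]; nlinarith
  · rw [e0, e1]
    rw [abs_le] at *
    constructor <;> nlinarith [hz2.1, hz2.2, hw2.1, hw2.2]

lemma Tri_subset_Creg (ha : 0 < a) (hb : 0 < b) (hab :
    {pt 0 0, pt a b, pt a (-b)} ⊆ Creg a b) :
    convexHull ℝ {pt 0 0, pt a b, pt a (-b)} ⊆ Creg a b :=
  convexHull_min hab (convex_Creg ha hb)

lemma vertices_mem_Creg (ha : 0 < a) (hb : 0 < b) :
    ({pt 0 0, pt a b, pt a (-b)} : Set E2) ⊆ Creg a b := by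
  intro z hz
  have hba : b / a * a = b := by field_simp
  rcases hz with h | h | h <;> subst h <;>
    simp only [Creg, Set.mem_setOf_eq, pt_apply0, pt_apply1] <;>
    constructor
  · linarith
  · simp
  · exact le_refl a
  · rw [hba, abs_of_pos hb]
  · exact le_refl a
  · rw [hba, abs_neg, abs_of_pos hb]

end tri

section tri2
variable {a b : ℝ}

lemma Oreg_subset_Tri (ha : 0 < a) (hb : 0 < b) :
    Oreg a b ⊆ convexHull ℝ {pt 0 0, pt a b, pt a (-b)} := by
  intro z hz
  obtain ⟨h0, h1, h2⟩ := hz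
  obtain ⟨hl, hr⟩ := abs_lt.mp h2
  have haz : a * z 1 < b * z 0 := by
    have := (mul_lt_mul_iff_right₀ ha).mpr hr
    calc a * z 1 < a * (b / a * z 0) := this
      _ = b * z 0 := by field_simp
  have haz' : -(b * z 0) < a * z 1 := by
    have := (mul_lt_mul_iff_right₀ ha).mpr hl
    calc -(b * z 0) = a * -(b / a * z 0) := by field_simp
      _ < a * z 1 := this
  have hz0 : 0 < z 0 := h0
  set s := z 0 / a with hsdef
  set u := (b * z 0 + a * z 1) / (2 * b * z 0) with hudef
  have hs0 : 0 ≤ s := by positivity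
  have hs1 : s ≤ 1 := le_of_lt ((div_lt_one ha).mpr h1)
  have hu0 : 0 ≤ u := by
    apply div_nonneg (by linarith) (by positivity)
  have hu1 : u ≤ 1 := by
    rw [div_le_one (by positivity)]
    linarith
  have hconv := convex_convexHull ℝ ({pt 0 0, pt a b, pt a (-b)} : Set E2)
  have hP : pt a b ∈ convexHull ℝ ({pt 0 0, pt a b, pt a (-b)} : Set E2) :=
    subset_convexHull ℝ _ (by simp)
  have hQ : pt a (-b) ∈ convexHull ℝ ({pt 0 0, pt a b, pt a (-b)} : Set E2) :=
    subset_convexHull ℝ _ (by simp)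
  have hO : pt 0 0 ∈ convexHull ℝ ({pt 0 0, pt a b, pt a (-b)} : Set E2) :=
    subset_convexHull ℝ _ (by simp)
  have hw : u • pt a b + (1 - u) • pt a (-b) ∈
      convexHull ℝ ({pt 0 0, pt a b, pt a (-b)} : Set E2) :=
    hconv hP hQ hu0 (by linarith) (by ring)
  have hzeq : z = (1 - s) • pt 0 0 + s • (u • pt a b + (1 - u) • pt a (-b)) := by
    ext i
    fin_cases i
    · show z 0 = (1 - s) * (pt 0 0 0) + s * (u * (pt a b 0) + (1 - u) * (pt a (-b) 0))
      rw [pt_apply0, pt_apply0, pt_apply0, hsdef]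
      field_simp
      ring
    · show z 1 = (1 - s) * (pt 0 0 1) + s * (u * (pt a b 1) + (1 - u) * (pt a (-b) 1))
      rw [pt_apply1, pt_apply1, pt_apply1, hsdef, hudef]
      field_simp
      ring
  rw [hzeq]
  exact hconv hO hw (by linarith) hs0 (by ring)

end tri2

def ψ : E2 ≃ᵐ ℝ × ℝ :=
  (MeasurableEquiv.toLp 2 (Fin 2 → ℝ)).symm.trans (MeasurableEquiv.piFinTwo fun _ => ℝ)

lemma ψ_mp : MeasurePreserving ψ volume volume :=
  (volume_preserving_piFinTwo fun _ => ℝ).comp (EuclideanSpace.volume_preserving_symm_measurableEquiv_toLp _)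

lemma ψ_apply (z : E2) : ψ z = (z 0, z 1) := rfl
lemma ψ_symm_apply0 (p : ℝ × ℝ) : (ψ.symm p) 0 = p.1 := rfl
lemma ψ_symm_apply1 (p : ℝ × ℝ) : (ψ.symm p) 1 = p.2 := rfl

example : (volume : Measure E2).IsAddHaarMeasure := by infer_instance
example (s : Set E2) (h : Convex ℝ s) : volume (frontier s) = 0 := h.addHaar_frontier _

def Oprod (a k : ℝ) : Set (ℝ × ℝ) := {p | 0 < p.1 ∧ p.1 < a ∧ |p.2| < k * p.1}

lemma isOpen_Oprod (a k : ℝ) : IsOpen (Oprod a k) := by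
  have h1 : IsOpen {p : ℝ × ℝ | 0 < p.1} := isOpen_lt continuous_const continuous_fst
  have h2 : IsOpen {p : ℝ × ℝ | p.1 < a} := isOpen_lt continuous_fst continuous_const
  have h3 : IsOpen {p : ℝ × ℝ | |p.2| < k * p.1} :=
    isOpen_lt continuous_snd.abs (continuous_const.mul continuous_fst)
  have : Oprod a k = ({p : ℝ × ℝ | 0 < p.1} ∩ {p : ℝ × ℝ | p.1 < a}) ∩ {p : ℝ × ℝ | |p.2| < k * p.1} := by
    ext p; exact ⟨fun h => ⟨⟨h.1, h.2.1⟩, h.2.2⟩, fun h => ⟨h.1.1, h.1.2, h.2⟩⟩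
  rw [this]; exact (h1.inter h2).inter h3

lemma fubini_Oprod (a k : ℝ) (ha : 0 < a) (hk : 0 < k) (F : ℝ → ℝ) (hF : Continuous F) :
    ∫ p in Oprod a k, F p.1 = ∫ x in (0:ℝ)..a, 2 * k * x * F x := by
  have hmeas : MeasurableSet (Oprod a k) := (isOpen_Oprod a k).measurableSet
  have hsub : Oprod a k ⊆ Set.Icc 0 a ×ˢ Set.Icc (-(k*a)) (k*a) := by
    rintro ⟨x, y⟩ ⟨h1, h2, h3⟩
    have hy : |y| < k * a := lt_of_lt_of_le h3 (by nlinarith)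
    obtain ⟨hy1, hy2⟩ := abs_lt.mp hy
    exact ⟨⟨h1.le, h2.le⟩, ⟨hy1.le, hy2.le⟩⟩
  have hint : IntegrableOn (fun p : ℝ × ℝ => F p.1) (Oprod a k) := by
    apply IntegrableOn.mono_set _ hsub
    exact (hF.comp continuous_fst).continuousOn.integrableOn_compact
      (isCompact_Icc.prod isCompact_Icc)
  rw [← MeasureTheory.integral_indicator hmeas]
  have hind : Integrable ((Oprod a k).indicator fun p : ℝ × ℝ => F p.1) volume :=
    (integrable_indicator_iff hmeas).mpr hint
  rw [show (volume : Measure (ℝ × ℝ)) = (volume : Measure ℝ).prod volume from Measure.volume_eq_prod ℝ ℝ]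
  rw [MeasureTheory.integral_prod _ (by rwa [← Measure.volume_eq_prod])]
  have inner : ∀ x : ℝ, (∫ y : ℝ, (Oprod a k).indicator (fun p : ℝ × ℝ => F p.1) (x, y))
      = (Set.Ioo (0:ℝ) a).indicator (fun x => 2 * k * x * F x) x := by
    intro x
    by_cases hx : x ∈ Set.Ioo (0:ℝ) a
    · have hslice : (fun y : ℝ => (Oprod a k).indicator (fun p : ℝ × ℝ => F p.1) (x, y))
          = (Set.Ioo (-(k*x)) (k*x)).indicator (fun _ => F x) := by
        funext y
        by_cases hy : y ∈ Set.Ioo (-(k*x)) (k*x)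
        · rw [Set.indicator_of_mem hy]
          have : (x, y) ∈ Oprod a k := ⟨hx.1, hx.2, abs_lt.mpr ⟨hy.1, hy.2⟩⟩
          rw [Set.indicator_of_mem this]
        · rw [Set.indicator_of_notMem hy]
          have : (x, y) ∉ Oprod a k := by
            intro hc
            exact hy (Set.mem_Ioo.mpr ⟨(abs_lt.mp hc.2.2).1, (abs_lt.mp hc.2.2).2⟩)
          rw [Set.indicator_of_notMem this]
      rw [hslice, MeasureTheory.integral_indicator measurableSet_Ioo,
        MeasureTheory.setIntegral_const, measureReal_def, Real.volume_Ioo, smul_eq_mul,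
        Set.indicator_of_mem hx]
      rw [ENNReal.toReal_ofReal (by nlinarith [hx.1] : (0:ℝ) ≤ k * x - -(k * x))]
      ring
    · have hslice : (fun y : ℝ => (Oprod a k).indicator (fun p : ℝ × ℝ => F p.1) (x, y))
          = fun _ => 0 := by
        funext y
        apply Set.indicator_of_notMem
        intro hc
        exact hx ⟨hc.1, hc.2.1⟩
      rw [hslice, Set.indicator_of_notMem hx, MeasureTheory.integral_zero]
  calc ∫ x : ℝ, ∫ y : ℝ, (Oprod a k).indicator (fun p : ℝ × ℝ => F p.1) (x, y)
      = ∫ x : ℝ, (Set.Ioo (0:ℝ) a).indicator (fun x => 2 * k * x * F x) x := by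
        congr 1; funext x; exact inner x
    _ = ∫ x in Set.Ioo (0:ℝ) a, 2 * k * x * F x :=
        MeasureTheory.integral_indicator measurableSet_Ioo
    _ = ∫ x in Set.Ioc (0:ℝ) a, 2 * k * x * F x :=
        (MeasureTheory.integral_Ioc_eq_integral_Ioo).symm
    _ = ∫ x in (0:ℝ)..a, 2 * k * x * F x := (intervalIntegral.integral_of_le ha.le).symm


section interior
variable {a b : ℝ}

lemma interior_Creg_subset (ha : 0 < a) (hb : 0 < b) :
    interior (Creg a b) ⊆ Oreg a b := by
  intro z hz
  obtain ⟨r, hr, hball⟩ := Metric.mem_nhds_iff.mp (mem_interior_iff_mem_nhds.mp hz)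
  have hmem : ∀ v : E2, ‖v‖ < r → z + v ∈ Creg a b := by
    intro v hv
    apply hball
    rw [Metric.mem_ball, dist_self_add_left]
    exact hv
  have hsingle : ∀ (i : Fin 2) (c : ℝ), ‖(EuclideanSpace.single i c : E2)‖ = |c| := by
    intro i c
    rw [EuclideanSpace.norm_single, Real.norm_eq_abs]
  have hr2 : |r/2| < r := by rw [abs_of_pos (by linarith)]; linarith
  have h0 : z 0 < a := by
    have := (hmem (EuclideanSpace.single 0 (r/2)) (by rw [hsingle]; exact hr2)).1
    have he : (z + EuclideanSpace.single 0 (r/2) : E2) 0 = z 0 + r/2 := by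
      simp [EuclideanSpace.single_apply]
    rw [he] at this
    linarith
  have h1 : |z 1| < (b/a) * z 0 := by
    rcases le_or_gt 0 (z 1) with hs | hs
    · have := (hmem (EuclideanSpace.single 1 (r/2)) (by rw [hsingle]; exact hr2)).2
      have he : (z + EuclideanSpace.single 1 (r/2) : E2) 1 = z 1 + r/2 := by
        simp [EuclideanSpace.single_apply]
      have he0 : (z + EuclideanSpace.single 1 (r/2) : E2) 0 = z 0 := by
        simp [EuclideanSpace.single_apply]
      rw [he, he0] at this
      have := le_trans (le_abs_self _) this
      rw [abs_of_nonneg hs]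
      linarith
    · have := (hmem (EuclideanSpace.single 1 (-(r/2))) (by rw [hsingle]; rwa [abs_neg])).2
      have he : (z + EuclideanSpace.single 1 (-(r/2)) : E2) 1 = z 1 - r/2 := by
        simp [EuclideanSpace.single_apply]; ring
      have he0 : (z + EuclideanSpace.single 1 (-(r/2)) : E2) 0 = z 0 := by
        simp [EuclideanSpace.single_apply]
      rw [he, he0] at this
      have := le_trans (neg_le_abs _) this
      rw [abs_of_neg hs]
      linarith
  have hz0 : 0 < z 0 := by
    by_contra hc
    push_neg at hc
    have : (b/a) * z 0 ≤ 0 := mul_nonpos_of_nonneg_of_nonpos (by positivity) hc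
    have := abs_nonneg (z 1)
    linarith
  exact ⟨hz0, h0, h1⟩

end interior

section main
variable {α : ℝ}

lemma setIntegral_Tri_eq (hα0 : 0 < α) (hα1 : α < π/3) (g : E2 → ℝ) :
    ∫ z in Tri α 1, g z = ∫ z in Oreg (Real.cos (α/2)) (Real.sin (α/2)), g z := by
  have hpi := Real.pi_pos
  set a := Real.cos (α/2) with hadef
  set b := Real.sin (α/2) with hbdef
  have ha : 0 < a := Real.cos_pos_of_mem_Ioo ⟨by linarith, by linarith⟩
  have hb : 0 < b := Real.sin_pos_of_pos_of_lt_pi (by linarith) (by linarith)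
  have hTri : Tri α 1 = convexHull ℝ {pt 0 0, pt a b, pt a (-b)} := by
    simp only [Tri, one_mul]; rfl
  have hO : Oreg a b ⊆ Tri α 1 := by rw [hTri]; exact Oreg_subset_Tri ha hb
  have hC : Tri α 1 ⊆ Creg a b := by
    rw [hTri]; exact Tri_subset_Creg ha hb (vertices_mem_Creg ha hb)
  have hnull : volume (Tri α 1 \ Oreg a b) = 0 := by
    apply measure_mono_null (t := frontier (Creg a b))
    · intro z hz
      constructor
      · exact subset_closure (hC hz.1)
      · intro hi
        exact hz.2 (interior_Creg_subset ha hb hi)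
    · exact (convex_Creg ha hb).addHaar_frontier _
  apply MeasureTheory.setIntegral_congr_set
  rw [MeasureTheory.ae_eq_set]
  refine ⟨hnull, ?_⟩
  rw [Set.diff_eq_empty.mpr hO]
  exact measure_empty

lemma integral_Tri (hα0 : 0 < α) (hα1 : α < π/3) (F : ℝ → ℝ) (hF : Continuous F) :
    ∫ z in Tri α 1, F (z 0)
      = ∫ x in (0:ℝ)..Real.cos (α/2),
          2 * (Real.sin (α/2) / Real.cos (α/2)) * x * F x := by
  have hpi := Real.pi_pos
  set a := Real.cos (α/2) with hadef
  set b := Real.sin (α/2) with hbdef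
  have ha : 0 < a := Real.cos_pos_of_mem_Ioo ⟨by linarith, by linarith⟩
  have hb : 0 < b := Real.sin_pos_of_pos_of_lt_pi (by linarith) (by linarith)
  rw [setIntegral_Tri_eq hα0 hα1]
  have hpre : Oreg a b = ψ ⁻¹' (Oprod a (b/a)) := rfl
  rw [hpre]
  have := ψ_mp.setIntegral_preimage_emb ψ.measurableEmbedding
    (fun p : ℝ × ℝ => F p.1) (Oprod a (b/a))
  rw [show (fun z : E2 => F (z 0)) = fun z : E2 => F ((ψ z).1) from rfl] at *
  rw [this]
  exact fubini_Oprod a (b/a) ha (div_pos hb ha) F hF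

end main


lemma hasGradientAt_bessel (c : ℝ) (z : E2) :
    HasGradientAt (fun w : E2 => besselJ 0 (c * w 0))
      ((-(c * besselJ 1 (c * z 0))) • (EuclideanSpace.single (0 : Fin 2) (1:ℝ) : E2)) z := by
  rw [hasGradientAt_iff_hasFDerivAt]
  have hπ : HasFDerivAt (fun w : E2 => w 0) (EuclideanSpace.proj (0 : Fin 2) : E2 →L[ℝ] ℝ) z :=
    ContinuousLinearMap.hasFDerivAt (EuclideanSpace.proj (0 : Fin 2) : E2 →L[ℝ] ℝ)
  have h1 : HasFDerivAt (fun w : E2 => c * w 0)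
      (c • (EuclideanSpace.proj (0 : Fin 2) : E2 →L[ℝ] ℝ)) z := hπ.const_mul c
  have h2 := (besselJ0_hasDerivAt (c * z 0)).comp_hasFDerivAt z h1
  refine h2.congr_fderiv ?_
  apply ContinuousLinearMap.ext
  intro h
  simp [InnerProductSpace.toDual_apply_apply, real_inner_smul_left, EuclideanSpace.inner_single_left]
  ring

lemma contDiff_bessel_comp (c : ℝ) : ContDiff ℝ 1 (fun w : E2 => besselJ 0 (c * w 0)) := by
  apply contDiff_besselJ_zero.comp
  exact (EuclideanSpace.proj (0 : Fin 2) : E2 →L[ℝ] ℝ).contDiff.const_smul c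


/-- Asymptotic sharpness of `μ₁·D² > j_{1,1}²`: for every `ε > 0` there is
`α₀ ∈ (0, π/3)` such that every subequilateral triangle `T(α)` with `α < α₀`
and unit equal sides admits a mean-zero trial function with Rayleigh quotient
below `j_{1,1}² + ε`. -/
theorem degenerate_acute_sharpness
    (j11 : ℝ) (hj11 : IsLeast {x : ℝ | 0 < x ∧ besselJ 1 x = 0} j11) :
    ∀ ε : ℝ, 0 < ε → ∃ α₀ : ℝ, α₀ ∈ Set.Ioo 0 (π/3) ∧
      ∀ α : ℝ, α ∈ Set.Ioo 0 α₀ →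
        ∃ v : E2 → ℝ, (∃ U : Set E2, IsOpen U ∧ Tri α 1 ⊆ U ∧ ContDiffOn ℝ 1 v U) ∧
          (∫ z in Tri α 1, v z = 0) ∧
          (0 < ∫ z in Tri α 1, (v z)^2) ∧
          ∫ z in Tri α 1, ‖gradient v z‖^2 <
            (j11^2 + ε) * ∫ z in Tri α 1, (v z)^2 := by
  intro ε hε
  have hpi := Real.pi_pos
  obtain ⟨⟨hj0, hjz⟩, -⟩ := hj11
  set S := j11^2 + ε with hSdef
  have hS : 0 < S := by positivity
  set r := j11 / Real.sqrt S with hrdef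
  have hsq : 0 < Real.sqrt S := Real.sqrt_pos.mpr hS
  have hr0 : 0 < r := div_pos hj0 hsq
  have hr1 : r < 1 := by
    rw [hrdef, div_lt_one hsq]
    rw [show j11 = Real.sqrt (j11^2) by rw [Real.sqrt_sq hj0.le]]
    exact Real.sqrt_lt_sqrt (by positivity) (by linarith)
  set r' := (1 + r) / 2 with hr'def
  have hr'0 : 0 < r' := by rw [hr'def]; linarith
  have hr'1 : r' < 1 := by rw [hr'def]; linarith
  have hrr' : r < r' := by rw [hr'def]; linarith
  set α₀ := min (π/6) (2 * Real.arccos r') with hα₀def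
  have harcpos : 0 < Real.arccos r' := Real.arccos_pos.mpr hr'1
  have hα₀pos : 0 < α₀ := lt_min (by linarith) (by linarith)
  have hα₀lt : α₀ < π/3 := lt_of_le_of_lt (min_le_left _ _) (by linarith)
  refine ⟨α₀, ⟨hα₀pos, hα₀lt⟩, ?_⟩
  intro α ⟨hα0, hαlt⟩
  have hα3 : α < π/3 := lt_trans hαlt hα₀lt
  set a := Real.cos (α/2) with hadef
  set b := Real.sin (α/2) with hbdef
  have ha : 0 < a := Real.cos_pos_of_mem_Ioo ⟨by linarith, by linarith⟩
  have hb : 0 < b := Real.sin_pos_of_pos_of_lt_pi (by linarith) (by linarith)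
  -- a > r
  have har : r < a := by
    have h1 : α/2 < Real.arccos r' := by
      have := lt_of_lt_of_le hαlt (min_le_right _ _)
      linarith
    have harc_le : Real.arccos r' ≤ π := Real.arccos_le_pi r'
    have hcos : Real.cos (Real.arccos r') < Real.cos (α/2) := by
      apply Real.cos_lt_cos_of_nonneg_of_le_pi (by linarith) harc_le h1
    rw [Real.cos_arccos (by linarith) (by linarith)] at hcos
    linarith
  set c := j11 / a with hcdef
  have hc : 0 < c := div_pos hj0 ha
  have hc' : c ≠ 0 := ne_of_gt hc
  have hca : c * a = j11 := by rw [hcdef]; field_simp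
  -- key inequality : c^2 < S
  have hc2 : c^2 < S := by
    have ha2 : r^2 < a^2 := by
      apply sq_lt_sq' (by linarith) har
    have hr2 : r^2 = j11^2 / S := by
      rw [hrdef, div_pow, Real.sq_sqrt hS.le]
    rw [hcdef, div_pow, div_lt_iff₀ (by positivity)]
    rw [hr2, div_lt_iff₀ hS] at ha2
    linarith [mul_pos (mul_pos hS (sub_pos.mpr ha2)) hS]
  set K := 2 * (b / a) with hKdef
  have hK : 0 < K := by positivity
  set I := ∫ x in (0:ℝ)..a, x * (besselJ 0 (c * x)) ^ 2 with hIdef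
  have hI : 0 < I := int_xJ0sq_pos c a hc ha
  refine ⟨fun w : E2 => besselJ 0 (c * w 0), ?_, ?_, ?_, ?_⟩
  · exact ⟨Set.univ, isOpen_univ, Set.subset_univ _, (contDiff_bessel_comp c).contDiffOn⟩
  · -- mean zero
    rw [integral_Tri hα0 hα3 (fun x => besselJ 0 (c * x)) (by fun_prop)]
    have : ∫ x in (0:ℝ)..a, 2 * (b/a) * x * besselJ 0 (c * x)
        = (2 * (b/a)) * ∫ x in (0:ℝ)..a, x * besselJ 0 (c * x) := by
      rw [← intervalIntegral.integral_const_mul]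
      apply integral_congr
      intro x _
      ring
    rw [this, int_xJ0 c hc' a, hca, hjz]
    simp
  · -- positivity
    rw [show (fun z : E2 => (besselJ 0 (c * z 0))^2) = fun z : E2 => (fun x => (besselJ 0 (c * x))^2) (z 0) from rfl]
    rw [integral_Tri hα0 hα3 (fun x => (besselJ 0 (c * x))^2) (by fun_prop)]
    have : ∫ x in (0:ℝ)..a, 2 * (b/a) * x * (besselJ 0 (c * x))^2
        = K * I := by
      rw [hIdef, hKdef, ← intervalIntegral.integral_const_mul]
      apply integral_congr
      intro x _
      ring
    rw [this]
    positivity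
  · -- Rayleigh quotient
    have hg : ∀ z : E2, ‖gradient (fun w : E2 => besselJ 0 (c * w 0)) z‖^2
        = (c * besselJ 1 (c * z 0))^2 := by
      intro z
      rw [(hasGradientAt_bessel c z).gradient, norm_smul, EuclideanSpace.norm_single]
      simp only [norm_neg, Real.norm_eq_abs, norm_one, mul_one, abs_abs, abs_mul]
      rw [mul_pow, sq_abs, sq_abs, ← mul_pow]
    have hL2 : ∫ z in Tri α 1, (besselJ 0 (c * z 0))^2 = K * I := by
      rw [integral_Tri hα0 hα3 (fun x => (besselJ 0 (c * x))^2) (by fun_prop)]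
      rw [hIdef, hKdef, ← intervalIntegral.integral_const_mul]
      apply integral_congr
      intro x _
      ring
    have hJ1I : ∫ x in (0:ℝ)..a, x * (besselJ 1 (c * x)) ^ 2 = I := by
      have h := int_J0sq_sub_J1sq c hc' a
      rw [hca, hjz, intervalIntegral.integral_sub (by apply Continuous.intervalIntegrable; fun_prop)
        (by apply Continuous.intervalIntegrable; fun_prop)] at h
      simp only [mul_zero, zero_div] at h
      rw [hIdef]
      linarith
    have hDir : ∫ z in Tri α 1, ‖gradient (fun w : E2 => besselJ 0 (c * w 0)) z‖^2
        = K * (c^2 * I) := by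
      rw [MeasureTheory.integral_congr_ae (Filter.Eventually.of_forall
        (fun z => hg z))]
      rw [show (fun z : E2 => (c * besselJ 1 (c * z 0))^2)
          = fun z : E2 => (fun x => (c * besselJ 1 (c * x))^2) (z 0) from rfl]
      rw [integral_Tri hα0 hα3 (fun x => (c * besselJ 1 (c * x))^2) (by fun_prop)]
      rw [← hJ1I, ← mul_assoc, ← intervalIntegral.integral_const_mul]
      apply integral_congr
      intro x _
      ring
    rw [hDir, hL2]
    have hKI : 0 < K * I := mul_pos hK hI
    calc K * (c^2 * I) = c^2 * (K * I) := by ring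
      _ < S * (K * I) := by exact mul_lt_mul_of_pos_right hc2 hKI
      _ = (j11^2 + ε) * (K * I) := by rw [hSdef]
end
end
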